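/- arXiv:math/0510281 — 10 statements merged into one kernel-verified Lean document; each statement's English description precedes it below -/
import Mathlib

section
/- The Kleisli extension T_M is order-compatible: for all 𝔵 𝔶 : T X, 𝔵 ≤ 𝔶 if and only if k ≤ T_M 1_X 𝔵 𝔶, where 1_X : X → X → V is the identity V-matrix, 1_X x y = k if x = y and ⊥ otherwise. -/
open scoped Classical

universe u v

/-- The Kleisli extension of a `Set`-monad `T` (whose values carry complete lattice
structures) along a quantale `V`: `T_M r 𝔵 𝔶 = ⨆ {a | 𝔵 ≤ 𝔶 >>= fun y => η (ρ_r^a y)}`,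
where `η A = ⨆ x ∈ A, pure x` and `ρ_r^a y = {x | a ≤ r x y}`. -/
noncomputable def kleisliExt (T : Type u → Type u) [Monad T]
    [∀ A : Type u, CompleteLattice (T A)] {V : Type v} [CompleteLattice V]
    {X Y : Type u} (r : X → Y → V) (t : T X) (s : T Y) : V :=
  sSup {a : V | t ≤ s >>= fun y => ⨆ x ∈ {x : X | a ≤ r x y}, pure x}

/-- The Kleisli extension is order-compatible: `𝔵 ≤ 𝔶 ↔ k ≤ T_M 1_X 𝔵 𝔶`. -/
theorem kleisliExt_order_compatible
    (T : Type u → Type u) [Monad T] [LawfulMonad T]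
    [∀ A : Type u, CompleteLattice (T A)]
    (hmap : ∀ {X Y : Type u} (f : X → Y) (S : Set (T X)),
      f <$> sSup S = ⨆ t ∈ S, f <$> t)
    (hmul : ∀ {X : Type u} (S : Set (T (T X))),
      sSup S >>= id = ⨆ t ∈ S, t >>= id)
    (hcoh : ∀ {X Y : Type u} (f g : X → T Y), (∀ x, f x ≤ g x) →
      ∀ t : T X, t >>= f ≤ t >>= g)
    (V : Type v) [CompleteLattice V] [Monoid V]
    (hl : ∀ (a : V) (S : Set V), a * sSup S = ⨆ s ∈ S, a * s)
    (hr : ∀ (a : V) (S : Set V), sSup S * a = ⨆ s ∈ S, s * a)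
    (hnt : (⊥ : V) ≠ 1)
    (X : Type u) (𝔵 𝔶 : T X) :
    𝔵 ≤ 𝔶 ↔ (1 : V) ≤ kleisliExt T (fun x y : X => if x = y then (1 : V) else ⊥) 𝔵 𝔶 := by
  unfold kleisliExt
  constructor
  · intro hxy
    apply le_sSup
    have hset : ∀ y : X, {x : X | (1 : V) ≤ if x = y then (1 : V) else ⊥} = {y} := by
      intro y
      ext x
      simp only [Set.mem_setOf_eq, Set.mem_singleton_iff]
      constructor
      · intro h
        by_contra hne
        rw [if_neg hne] at h
        exact hnt (le_antisymm bot_le h)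
      · intro h; rw [if_pos h]
    show 𝔵 ≤ _
    have : (𝔶 >>= fun y => ⨆ x ∈ {x : X | (1 : V) ≤ if x = y then (1 : V) else ⊥}, pure x)
        = 𝔶 >>= pure := by
      congr 1
      funext y
      rw [hset y]
      simp
    rw [this, bind_pure]
    exact hxy
  · intro h
    by_contra hxy
    have hall : ∀ a ∈ {a : V | 𝔵 ≤ 𝔶 >>= fun y =>
        ⨆ x ∈ {x : X | a ≤ if x = y then (1 : V) else ⊥}, pure x}, a ≤ ⊥ := by
      intro a ha
      by_contra hab
      apply hxy
      have hsub : ∀ y : X,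
          (⨆ x ∈ {x : X | a ≤ if x = y then (1 : V) else ⊥}, pure x : T X) ≤ pure y := by
        intro y
        apply iSup_le; intro x; apply iSup_le; intro hx
        rcases eq_or_ne x y with hxy' | hxy'
        · exact le_of_eq (by rw [hxy'])
        · simp only [Set.mem_setOf_eq, if_neg hxy'] at hx
          exact absurd hx hab
      calc 𝔵 ≤ 𝔶 >>= fun y =>
              ⨆ x ∈ {x : X | a ≤ if x = y then (1 : V) else ⊥}, pure x := ha
        _ ≤ 𝔶 >>= pure := hcoh _ _ hsub 𝔶
        _ = 𝔶 := bind_pure 𝔶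
    have : (1 : V) ≤ ⊥ := h.trans (sSup_le hall)
    exact hnt (le_antisymm bot_le this)
end

section
/- For every a : V and every 𝔵 : T X, a ⊓ k ≤ T_M (fun x y => if x = y then a ⊓ k else ⊥) 𝔵 𝔵; equivalently, the V-matrix a_{TX} ⊓ 1_{TX} on T X (with value a ⊓ k on the diagonal and ⊥ off the diagonal) is pointwise below T_M (a_X ⊓ 1_X). -/
open scoped Classical

universe u v

/-- `(a_{TX} ⊓ 1_{TX}) ≤ T_M (a_X ⊓ 1_X)` for the Kleisli extension. -/
theorem kleisliExt_diag
    (T : Type u → Type u) [Monad T] [LawfulMonad T]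
    [∀ A : Type u, CompleteLattice (T A)]
    (hmap : ∀ {X Y : Type u} (f : X → Y) (S : Set (T X)),
      f <$> sSup S = ⨆ t ∈ S, f <$> t)
    (hmul : ∀ {X : Type u} (S : Set (T (T X))),
      sSup S >>= id = ⨆ t ∈ S, t >>= id)
    (hcoh : ∀ {X Y : Type u} (f g : X → T Y), (∀ x, f x ≤ g x) →
      ∀ t : T X, t >>= f ≤ t >>= g)
    (V : Type v) [CompleteLattice V] [Monoid V]
    (hl : ∀ (a : V) (S : Set V), a * sSup S = ⨆ s ∈ S, a * s)
    (hr : ∀ (a : V) (S : Set V), sSup S * a = ⨆ s ∈ S, s * a)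
    (hnt : (⊥ : V) ≠ 1)
    (X : Type u) (a : V) (𝔵 : T X) :
    a ⊓ 1 ≤ kleisliExt T (fun x y : X => if x = y then a ⊓ 1 else ⊥) 𝔵 𝔵 := by
  apply le_sSup
  show 𝔵 ≤ _
  calc 𝔵 = 𝔵 >>= pure := (bind_pure 𝔵).symm
    _ ≤ _ := hcoh _ _ (fun y =>
        le_iSup₂ (f := fun (x : X) (_ : x ∈ {x : X | a ⊓ 1 ≤ if x = y then a ⊓ 1 else ⊥}) =>
          (pure x : T X)) y (by simp)) 𝔵
end

section
/- For every V-tower α on X, the round trip through r_α recovers α: for every a : V and y : X, ⨆ {𝔵 : T X | a ≤ ⨆ {b : V | 𝔵 ≤ α b y}} = α a y (i.e. α_{r_α} = α, where r_α 𝔵 y = ⨆ {b | 𝔵 ≤ α b y} and α_r a y = ⨆ {𝔵 | a ≤ r 𝔵 y}). -/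
open scoped Classical

universe u v

/-- Round trip through `r_α` recovers the `V`-tower `α`: `α_{r_α} = α`. -/
theorem tower_roundtrip
    (T : Type u → Type u) [Monad T] [LawfulMonad T]
    [∀ A : Type u, CompleteLattice (T A)]
    (hmap : ∀ {X Y : Type u} (f : X → Y) (S : Set (T X)),
      f <$> sSup S = ⨆ t ∈ S, f <$> t)
    (hmul : ∀ {X : Type u} (S : Set (T (T X))),
      sSup S >>= id = ⨆ t ∈ S, t >>= id)
    (hcoh : ∀ {X Y : Type u} (f g : X → T Y), (∀ x, f x ≤ g x) →
      ∀ t : T X, t >>= f ≤ t >>= g)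
    (V : Type v) [CompletelyDistribLattice V] [Monoid V]
    (hl : ∀ (a : V) (S : Set V), a * sSup S = ⨆ s ∈ S, a * s)
    (hr : ∀ (a : V) (S : Set V), sSup S * a = ⨆ s ∈ S, s * a)
    (hnt : (⊥ : V) ≠ 1)
    (X : Type u) (α : V → X → T X)
    (hK0 : ∀ (S : Set V) (y : X), α (sSup S) y = ⨅ a ∈ S, α a y)
    (hK1 : ∀ y : X, pure y ≤ α 1 y)
    (hK2 : ∀ (a b : V) (y : X), (α b y >>= α a) ≤ α (a * b) y)
    (a : V) (y : X) :
    sSup {𝔵 : T X | a ≤ sSup {b : V | 𝔵 ≤ α b y}} = α a y := by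
  have hanti : ∀ c d : V, c ≤ d → α d y ≤ α c y := by
    intro c d hcd
    have h := hK0 {c, d} y
    rw [sSup_pair, sup_eq_right.mpr hcd, iInf_pair] at h
    rw [h]; exact inf_le_left
  apply le_antisymm
  · apply sSup_le
    intro t ht
    calc t ≤ ⨅ b ∈ {b : V | t ≤ α b y}, α b y := le_iInf₂ fun b hb => hb
      _ = α (sSup {b : V | t ≤ α b y}) y := (hK0 _ y).symm
      _ ≤ α a y := hanti _ _ ht
  · exact le_sSup (le_sSup (le_refl (α a y)))
end

section
/- For every r : X → Y → V and all A : Set X, B : Set Y: ⨆ {a : V | ∀ x ∈ A, ∃ y ∈ B, a ≤ r x y} = ⨅_{x ∈ A} ⨆_{y ∈ B} r x y. (The left-hand side is the Kleisli extension of the powerset monad applied to r, evaluated at (A, B); the right-hand side is the op-canonical extension of the powerset functor.) -/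
/-- The Kleisli extension of the powerset monad coincides with the op-canonical
extension of the powerset functor:
`⨆ {a | ∀ x ∈ A, ∃ y ∈ B, a ≤ r x y} = ⨅_{x ∈ A} ⨆_{y ∈ B} r x y`. -/
theorem powersetKleisliExt_eq_opCanonical {V : Type*} [CompletelyDistribLattice V]
    {X Y : Type*} (r : X → Y → V) (A : Set X) (B : Set Y) :
    sSup {a : V | ∀ x ∈ A, ∃ y ∈ B, a ≤ r x y} = ⨅ x ∈ A, ⨆ y ∈ B, r x y := by
  apply le_antisymm
  · apply sSup_le
    intro a ha
    refine le_iInf fun x => le_iInf fun hx => ?_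
    obtain ⟨y, hy, hle⟩ := ha x hx
    exact hle.trans (le_iSup_of_le y (le_iSup_of_le hy le_rfl))
  · have h : (⨅ x ∈ A, ⨆ y ∈ B, r x y) = ⨅ (x : A), ⨆ (y : B), r x y := by
      rw [iInf_subtype']
      exact iInf_congr fun x => by rw [iSup_subtype']
    rw [h, iInf_iSup_eq]
    apply iSup_le
    intro g
    apply le_sSup
    intro x hx
    exact ⟨g ⟨x, hx⟩, (g ⟨x, hx⟩).2, iInf_le (fun i : A => r i (g i)) (⟨x, hx⟩ : A)⟩
end

section
/- For every r : X → Y → V and all filters 𝔣 : Filter X, 𝔤 : Filter Y: ⨆ {a : V | ∀ B ∈ 𝔤, {x | ∃ y ∈ B, a ≤ r x y} ∈ 𝔣} = ⨅_{B ∈ 𝔤} ⨆_{A ∈ 𝔣} ⨅_{x ∈ A} ⨆_{y ∈ B} r x y. (The left-hand side is the Kleisli extension of the filter monad applied to r, evaluated at (𝔣, 𝔤); the right-hand side is the op-canonical extension of the filter functor.) -/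
/-- The Kleisli extension of the filter monad coincides with the op-canonical
extension of the filter functor:
`⨆ {a | ∀ B ∈ 𝔤, {x | ∃ y ∈ B, a ≤ r x y} ∈ 𝔣} = ⨅_{B ∈ 𝔤} ⨆_{A ∈ 𝔣} ⨅_{x ∈ A} ⨆_{y ∈ B} r x y`. -/
theorem filterKleisliExt_eq_opCanonical {V : Type*} [CompletelyDistribLattice V]
    {X Y : Type*} (r : X → Y → V) (𝔣 : Filter X) (𝔤 : Filter Y) :
    sSup {a : V | ∀ B ∈ 𝔤, {x | ∃ y ∈ B, a ≤ r x y} ∈ 𝔣} =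
      ⨅ B ∈ 𝔤, ⨆ A ∈ 𝔣, ⨅ x ∈ A, ⨆ y ∈ B, r x y := by
  apply le_antisymm
  · apply sSup_le
    intro a ha
    refine le_iInf₂ fun B hB => ?_
    refine le_iSup₂_of_le _ (ha B hB) ?_
    refine le_iInf₂ fun x hx => ?_
    obtain ⟨y, hy, hle⟩ := hx
    exact le_iSup₂_of_le y hy hle
  · have h1 : ∀ B : Set Y, (⨆ A ∈ 𝔣, ⨅ x ∈ A, ⨆ y ∈ B, r x y)
        = ⨆ p : Σ A : {A : Set X // A ∈ 𝔣}, (↥(A : Set X) → ↥B),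
            ⨅ x : (p.1 : Set X), r (x : X) (p.2 x) := by
      intro B
      rw [iSup_sigma]
      rw [iSup_subtype']
      congr 1
      funext A
      calc (⨅ x ∈ (A : Set X), ⨆ y ∈ B, r x y)
          = ⨅ x : (A : Set X), ⨆ y : B, r (x : X) (y : Y) := by
            rw [iInf_subtype']; congr 1; funext x; rw [iSup_subtype']
        _ = ⨆ g : (↥(A : Set X) → ↥B), ⨅ x : (A : Set X), r (x : X) (g x) :=
            iInf_iSup_eq
    calc (⨅ B ∈ 𝔤, ⨆ A ∈ 𝔣, ⨅ x ∈ A, ⨆ y ∈ B, r x y)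
        = ⨅ B : {B : Set Y // B ∈ 𝔤}, ⨆ p : Σ A : {A : Set X // A ∈ 𝔣},
            (↥(A : Set X) → ↥(B : Set Y)), ⨅ x : (p.1 : Set X), r (x : X) (p.2 x) := by
          rw [iInf_subtype']; congr 1; funext B; exact h1 B
      _ = ⨆ G : ∀ B : {B : Set Y // B ∈ 𝔤}, Σ A : {A : Set X // A ∈ 𝔣},
            (↥(A : Set X) → ↥(B : Set Y)),
            ⨅ B : {B : Set Y // B ∈ 𝔤}, ⨅ x : ((G B).1 : Set X),
              r (x : X) ((G B).2 x) := iInf_iSup_eq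
      _ ≤ sSup {a : V | ∀ B ∈ 𝔤, {x | ∃ y ∈ B, a ≤ r x y} ∈ 𝔣} := by
          apply iSup_le
          intro G
          apply le_sSup
          intro B hB
          apply Filter.mem_of_superset (G ⟨B, hB⟩).1.2
          intro x hx
          refine ⟨(G ⟨B, hB⟩).2 ⟨x, hx⟩, ((G ⟨B, hB⟩).2 ⟨x, hx⟩).2, ?_⟩
          exact le_trans (iInf_le _ ⟨B, hB⟩) (iInf_le _ (⟨x, hx⟩ : ((G ⟨B, hB⟩).1 : Set X)))
end

section
/- If c : Set X → X → V is a V-valued closure operator (satisfies (C1), (C2), (C3)), then γ_c : V → Set X → Set X defined by γ_c a A = {x | a ≤ c A x} is a V-graded closure operator (satisfies (Γ1), (Γ2), (Γ3), (Γ4)). -/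
/-- `b` is totally below `a`: every set whose supremum dominates `a` contains an
element dominating `b`. -/
def totallyBelow {V : Type*} [CompleteLattice V] (b a : V) : Prop :=
  ∀ S : Set V, a ≤ sSup S → ∃ s ∈ S, b ≤ s

theorem le_sSup_totallyBelow {V : Type*} [CompletelyDistribLattice V] (a : V) :
    a ≤ sSup {b | totallyBelow b a} := by
  classical
  have key : (⨅ T : {T : Set V // a ≤ sSup T}, ⨆ t : T.1, (t : V))
      = ⨆ g : (T : {T : Set V // a ≤ sSup T}) → T.1, ⨅ T, ((g T : V)) :=
    iInf_iSup_eq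
  have h1 : a ≤ ⨅ T : {T : Set V // a ≤ sSup T}, ⨆ t : T.1, (t : V) := by
    refine le_iInf fun T => T.2.trans ?_
    rw [sSup_eq_iSup']
  rw [key] at h1
  refine h1.trans (iSup_le fun g => le_sSup fun S hS => ?_)
  exact ⟨g ⟨S, hS⟩, (g ⟨S, hS⟩).2, iInf_le _ _⟩

/-- If `c` is a `V`-valued closure operator, then `γ_c a A = {x | a ≤ c A x}` is a
`V`-graded closure operator: (Γ1)–(Γ4) hold. -/
theorem graded_of_valued_closure
    {V : Type*} [CompletelyDistribLattice V] [Monoid V]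
    (hl : ∀ (a : V) (S : Set V), a * sSup S = ⨆ s ∈ S, a * s)
    (hr : ∀ (a : V) (S : Set V), sSup S * a = ⨆ s ∈ S, s * a)
    (hnt : (⊥ : V) ≠ 1)
    {X : Type*} (c : Set X → X → V)
    (hC1 : ∀ (A : Set X) (x : X), x ∈ A → (1 : V) ≤ c A x)
    (hC2 : ∀ (A B : Set X) (x : X), A ⊆ B → c A x ≤ c B x)
    (hC3 : ∀ (a : V) (A : Set X) (x : X), a * c {y | a ≤ c A y} x ≤ c A x) :
    (∀ (a : V) (A : Set X), a ≤ 1 → A ⊆ {x | a ≤ c A x})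
    ∧ (∀ (a : V) (A B : Set X), A ⊆ B → {x | a ≤ c A x} ⊆ {x | a ≤ c B x})
    ∧ (∀ (a b : V) (A : Set X),
        {x | b ≤ c {y | a ≤ c A y} x} ⊆ {x | a * b ≤ c A x})
    ∧ (∀ (a : V) (A : Set X),
        {x | a ≤ c A x} = ⋂ b, ⋂ (_ : totallyBelow b a), {x | b ≤ c A x}) := by
  -- multiplication is monotone in the right argument
  have hmono : ∀ a u v : V, u ≤ v → a * u ≤ a * v := by
    intro a u v huv
    have h : a * sSup {u, v} = ⨆ s ∈ ({u, v} : Set V), a * s := hl a {u, v}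
    have hs : sSup ({u, v} : Set V) = v := by
      rw [sSup_pair, sup_eq_right.mpr huv]
    rw [hs] at h
    rw [h]
    exact le_biSup _ (Set.mem_insert u {v})
  refine ⟨?_, ?_, ?_, ?_⟩
  · intro a A ha x hx
    exact ha.trans (hC1 A x hx)
  · intro a A B hAB x hx
    exact le_trans hx (hC2 A B x hAB)
  · intro a b A x hx
    exact le_trans (hmono a _ _ hx) (hC3 a A x)
  · intro a A
    ext x
    simp only [Set.mem_iInter, Set.mem_setOf_eq]
    constructor
    · intro hx b hb
      obtain ⟨s, hs, hbs⟩ := hb {a} (le_of_eq (sSup_singleton).symm)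
      rcases hs with rfl
      exact hbs.trans hx
    · intro h
      refine le_trans (le_sSup_totallyBelow a) (sSup_le fun b hb => h b hb)
end

section
/- If γ : V → Set X → Set X is a V-graded closure operator (satisfies (Γ1)–(Γ4)), then c_γ : Set X → X → V defined by c_γ A x = ⨆ {a : V | x ∈ γ a A} is a V-valued closure operator (satisfies (C1), (C2), (C3)). -/
/-- If `γ` is a `V`-graded closure operator, then `c_γ A x = ⨆ {a | x ∈ γ a A}` is a
`V`-valued closure operator: (C1)–(C3) hold. -/
theorem valued_of_graded_closure
    {V : Type*} [CompletelyDistribLattice V] [Monoid V]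
    (hl : ∀ (a : V) (S : Set V), a * sSup S = ⨆ s ∈ S, a * s)
    (hr : ∀ (a : V) (S : Set V), sSup S * a = ⨆ s ∈ S, s * a)
    (hnt : (⊥ : V) ≠ 1)
    {X : Type*} (γ : V → Set X → Set X)
    (hG1 : ∀ (a : V) (A : Set X), a ≤ 1 → A ⊆ γ a A)
    (hG2 : ∀ (a : V) (A B : Set X), A ⊆ B → γ a A ⊆ γ a B)
    (hG3 : ∀ (a b : V) (A : Set X), γ b (γ a A) ⊆ γ (a * b) A)
    (hG4 : ∀ (a : V) (A : Set X), γ a A = ⋂ b, ⋂ (_ : totallyBelow b a), γ b A) :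
    (∀ (A : Set X) (x : X), x ∈ A → (1 : V) ≤ sSup {a : V | x ∈ γ a A})
    ∧ (∀ (A B : Set X) (x : X), A ⊆ B →
        sSup {a : V | x ∈ γ a A} ≤ sSup {a : V | x ∈ γ a B})
    ∧ (∀ (a : V) (A : Set X) (x : X),
        a * sSup {b : V | x ∈ γ b {y | a ≤ sSup {d : V | y ∈ γ d A}}} ≤
          sSup {b : V | x ∈ γ b A}) := by
  -- antitone in the grade
  have anti : ∀ (b s : V) (A : Set X), b ≤ s → γ s A ⊆ γ b A := by
    intro b s A hbs
    rw [hG4 b A, hG4 s A]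
    intro y hy
    simp only [Set.mem_iInter] at hy ⊢
    intro c hc
    exact hy c (fun S hS => hc S (hbs.trans hS))
  refine ⟨?_, ?_, ?_⟩
  · intro A x hx
    exact le_sSup (hG1 1 A le_rfl hx)
  · intro A B x hAB
    exact sSup_le_sSup (fun a ha => hG2 a A B hAB ha)
  · intro a A x
    rw [hl]
    refine iSup_le fun b => iSup_le fun hb => le_sSup ?_
    -- show x ∈ γ (a * b) A, noting a * b ∈ the set means x ∈ γ (a*b) A; use hG3
    have key : {y | a ≤ sSup {d : V | y ∈ γ d A}} ⊆ γ a A := by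
      intro y hy
      rw [hG4 a A]
      simp only [Set.mem_iInter]
      intro c hc
      obtain ⟨s, hs, hcs⟩ := hc _ hy
      exact anti c s A hcs hs
    exact hG3 a b A (hG2 b _ _ key hb)
end

section
/- The correspondences c ↦ γ_c (γ_c a A = {x | a ≤ c A x}) and γ ↦ c_γ (c_γ A x = ⨆ {a | x ∈ γ a A}) between V-valued closure operators and V-graded closure operators are mutually inverse: for every V-valued closure operator c, every A : Set X and x : X, ⨆ {a : V | a ≤ c A x} = c A x; and for every V-graded closure operator γ, every a : V and A : Set X, {x | a ≤ ⨆ {b : V | x ∈ γ b A}} = γ a A. -/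
/-- The correspondences `c ↦ γ_c` and `γ ↦ c_γ` between `V`-valued and `V`-graded
closure operators are mutually inverse. -/
theorem closure_correspondence_roundtrips
    {V : Type*} [CompletelyDistribLattice V] [Monoid V]
    (hl : ∀ (a : V) (S : Set V), a * sSup S = ⨆ s ∈ S, a * s)
    (hr : ∀ (a : V) (S : Set V), sSup S * a = ⨆ s ∈ S, s * a)
    (hnt : (⊥ : V) ≠ 1)
    {X : Type*} :
    (∀ c : Set X → X → V,
      (∀ (A : Set X) (x : X), x ∈ A → (1 : V) ≤ c A x) →
      (∀ (A B : Set X) (x : X), A ⊆ B → c A x ≤ c B x) →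
      (∀ (a : V) (A : Set X) (x : X), a * c {y | a ≤ c A y} x ≤ c A x) →
      ∀ (A : Set X) (x : X), sSup {a : V | a ≤ c A x} = c A x)
    ∧ (∀ γ : V → Set X → Set X,
      (∀ (a : V) (A : Set X), a ≤ 1 → A ⊆ γ a A) →
      (∀ (a : V) (A B : Set X), A ⊆ B → γ a A ⊆ γ a B) →
      (∀ (a b : V) (A : Set X), γ b (γ a A) ⊆ γ (a * b) A) →
      (∀ (a : V) (A : Set X), γ a A = ⋂ b, ⋂ (_ : totallyBelow b a), γ b A) →
      ∀ (a : V) (A : Set X), {x | a ≤ sSup {b : V | x ∈ γ b A}} = γ a A) := by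
  constructor
  · intro c _ _ _ A x
    exact le_antisymm (sSup_le fun a ha => ha) (le_sSup le_rfl)
  · intro γ _ _ _ h4 a A
    ext x
    simp only [Set.mem_setOf_eq]
    constructor
    · intro hx
      rw [h4 a A]
      refine Set.mem_iInter.2 fun b => Set.mem_iInter.2 fun hb => ?_
      obtain ⟨s, hs, hbs⟩ := hb _ hx
      -- x ∈ γ s A; show x ∈ γ b A using Γ4 at level b
      rw [h4 b A]
      refine Set.mem_iInter.2 fun d => Set.mem_iInter.2 fun hd => ?_
      have hds : totallyBelow d s := fun S hS => hd S (hbs.trans hS)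
      have : x ∈ γ s A := hs
      rw [h4 s A] at this
      exact Set.mem_iInter.1 (Set.mem_iInter.1 this d) hds
    · intro hx
      exact le_sSup hx
end

section
/- If γ : V → Set X → Set X is a V-graded closure operator, then α_γ : V → X → Set (Set X) defined by α_γ a x = {A : Set X | x ∉ γ a Aᶜ} is a V-tower for the up-set monad: each α_γ a x is an up-set on X, and (K0), (K1), (K2) hold. -/
/-- If `γ` is a `V`-graded closure operator, then `α_γ a x = {A | x ∉ γ a Aᶜ}` is a
`V`-tower for the up-set monad: each `α_γ a x` is an up-set, and (K0)–(K2) hold. -/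
theorem upset_tower_of_graded_closure
    {V : Type*} [CompletelyDistribLattice V] [Monoid V]
    (hl : ∀ (a : V) (S : Set V), a * sSup S = ⨆ s ∈ S, a * s)
    (hr : ∀ (a : V) (S : Set V), sSup S * a = ⨆ s ∈ S, s * a)
    (hnt : (⊥ : V) ≠ 1)
    {X : Type*} (γ : V → Set X → Set X)
    (hG1 : ∀ (a : V) (A : Set X), a ≤ 1 → A ⊆ γ a A)
    (hG2 : ∀ (a : V) (A B : Set X), A ⊆ B → γ a A ⊆ γ a B)
    (hG3 : ∀ (a b : V) (A : Set X), γ b (γ a A) ⊆ γ (a * b) A)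
    (hG4 : ∀ (a : V) (A : Set X), γ a A = ⋂ b, ⋂ (_ : totallyBelow b a), γ b A) :
    (∀ (a : V) (x : X) (A B : Set X),
        A ∈ {C : Set X | x ∉ γ a Cᶜ} → A ⊆ B → B ∈ {C : Set X | x ∉ γ a Cᶜ})
    ∧ (∀ (S : Set V) (x : X),
        {C : Set X | x ∉ γ (sSup S) Cᶜ} = ⋃ a ∈ S, {C : Set X | x ∉ γ a Cᶜ})
    ∧ (∀ (x : X) (A : Set X), A ∈ {C : Set X | x ∉ γ 1 Cᶜ} → x ∈ A)
    ∧ (∀ (a b : V) (x : X) (A : Set X),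
        A ∈ {C : Set X | x ∉ γ (a * b) Cᶜ} →
          {y | A ∈ {C : Set X | y ∉ γ a Cᶜ}} ∈ {C : Set X | x ∉ γ b Cᶜ}) := by
  have anti : ∀ (a b : V) (A : Set X), b ≤ a → γ a A ⊆ γ b A := by
    intro a b A hba
    rw [hG4 a A, hG4 b A]
    intro x hx
    simp only [Set.mem_iInter] at hx ⊢
    intro c hc
    exact hx c (fun S hS => hc S (hba.trans hS))
  refine ⟨?_, ?_, ?_, ?_⟩
  · intro a x A B hA hAB hB
    exact hA (hG2 a Bᶜ Aᶜ (Set.compl_subset_compl.2 hAB) hB)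
  · intro S x
    ext C
    simp only [Set.mem_setOf_eq, Set.mem_iUnion]
    constructor
    · intro h
      by_contra hc
      push_neg at hc
      apply h
      rw [hG4 (sSup S) Cᶜ]
      simp only [Set.mem_iInter]
      intro b hb
      obtain ⟨s, hsS, hbs⟩ := hb S le_rfl
      exact anti s b Cᶜ hbs (hc s hsS)
    · rintro ⟨a, haS, ha⟩ h
      exact ha (anti (sSup S) a Cᶜ (le_sSup haS) h)
  · intro x A hA
    by_contra hx
    exact hA (hG1 1 Aᶜ le_rfl hx)
  · intro a b x A hA hx
    exact hA (hG3 a b Aᶜ (hG2 b _ _ (fun y hy => not_not.1 hy) hx))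
end

section
/- The assignments α ↦ r_α and r ↦ α_r, where r_α 𝔣 y ↔ (∀ A : X → L, α y A ≤ 𝔣 A) and (α_r y) A = ⨅_{𝔣 : F_L X with r 𝔣 y} 𝔣 A, are mutually inverse bijections between: (a) the set of maps α : X → F_L X satisfying (K1) α x A ≤ A x for all x : X, A : X → L, and (K2) α x A ≤ α x (fun y => α y A) for all x : X, A : X → L (L-valued neighborhood systems, i.e. L-valued topologies on X); and (b) the set of relations r : F_L X → X → Prop satisfying (L1) r (e_X x) x for all x : X, and (L2) for all L-valued filters 𝔉 on F_L X, all g : F_L X and z : X: if (∀ Φ : F_L X → L, g (fun y => ⨅_{𝔣 : F_L X with r 𝔣 y} Φ 𝔣) ≤ 𝔉 Φ) and r g z, then r (m_X 𝔉) z ((F_L, 2)-algebra structures with respect to the Kleisli extension of the L-valued filter monad). This realizes the isomorphism Alg(F_L, 2) ≅ Top(L) on objects. -/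
universe u v

/-- An `L`-valued filter on `X`: a map `(X → L) → L` satisfying (F1), (F2), (F3). -/
structure LFilter (L : Type v) [CompleteLattice L] (mul : L → L → L) (X : Type u) where
  toFun : (X → L) → L
  map_top : toFun (fun _ => ⊤) = ⊤
  mono : ∀ A B : X → L, (∀ x, A x ≤ B x) → toFun A ≤ toFun B
  map_mul : ∀ A B : X → L, mul (toFun A) (toFun B) ≤ toFun fun x => mul (A x) (B x)

variable {L : Type v} [CompleteLattice L] {mul : L → L → L} {X : Type u}

/-- The unit `e_X` of the `L`-valued filter monad: `e_X x = fun A => A x`. -/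
def LFilter.unit (L : Type v) [CompleteLattice L] (mul : L → L → L) (x : X) :
    LFilter L mul X where
  toFun A := A x
  map_top := rfl
  mono _ _ h := h x
  map_mul _ _ := le_refl _

/-- The multiplication `m_X` of the `L`-valued filter monad:
`m_X 𝔉 = fun A => 𝔉 (fun 𝔣 => 𝔣 A)`. -/
def LFilter.mult (𝔉 : LFilter L mul (LFilter L mul X)) : LFilter L mul X where
  toFun A := 𝔉.toFun fun 𝔣 => 𝔣.toFun A
  map_top := by
    have h : (fun 𝔣 : LFilter L mul X => 𝔣.toFun fun _ => ⊤) = fun _ => (⊤ : L) := by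
      funext 𝔣; exact 𝔣.map_top
    show 𝔉.toFun (fun 𝔣 => 𝔣.toFun fun _ => ⊤) = ⊤
    rw [h, 𝔉.map_top]
  mono A B h := 𝔉.mono _ _ fun 𝔣 => 𝔣.mono A B h
  map_mul A B :=
    le_trans (𝔉.map_mul _ _) (𝔉.mono _ _ fun 𝔣 => 𝔣.map_mul A B)

/-- The supremum (pointwise infimum) of a set of `L`-valued filters; for
monotone `mul` it is again an `L`-valued filter. -/
def LFilter.infOn (hmono : ∀ a b c d : L, a ≤ b → c ≤ d → mul a c ≤ mul b d)
    (S : Set (LFilter L mul X)) : LFilter L mul X where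
  toFun A := ⨅ 𝔣 ∈ S, 𝔣.toFun A
  map_top := by simp [LFilter.map_top]
  mono A B h := le_iInf₂ fun 𝔣 h𝔣 => le_trans (biInf_le _ h𝔣) (𝔣.mono A B h)
  map_mul A B := le_iInf₂ fun 𝔣 h𝔣 =>
    le_trans (hmono _ _ _ _ (biInf_le _ h𝔣) (biInf_le _ h𝔣)) (𝔣.map_mul A B)

/-- `α` is an `L`-valued neighborhood system (an `L`-valued topology), i.e. a
Kleisli `F_L`-algebra structure: (K1) `e_X ≤ α` and (K2) `α ∘ α ≤ α`. -/
def IsLTopology (α : X → LFilter L mul X) : Prop :=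
  (∀ (x : X) (A : X → L), (α x).toFun A ≤ A x) ∧
  (∀ (x : X) (A : X → L),
    (α x).toFun A ≤ (α x).toFun fun y => (α y).toFun A)

/-- `r` is an `(F_L,2)`-algebra structure with respect to the Kleisli extension of
the `L`-valued filter monad: (L1) reflexivity and (L2) transitivity. -/
def IsLConvergence (r : LFilter L mul X → X → Prop) : Prop :=
  (∀ x : X, r (LFilter.unit L mul x) x) ∧
  (∀ (𝔉 : LFilter L mul (LFilter L mul X)) (g : LFilter L mul X) (z : X),
    (∀ Φ : LFilter L mul X → L,
      g.toFun (fun y => ⨅ 𝔣 ∈ {𝔣 : LFilter L mul X | r 𝔣 y}, Φ 𝔣) ≤ 𝔉.toFun Φ) →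
    r g z → r (LFilter.mult 𝔉) z)

theorem LFilter.ext' {f g : LFilter L mul X} (h : f.toFun = g.toFun) : f = g := by
  cases f; cases g; cases h; rfl

/-- The filter on `F_L X` given by `Φ ↦ ⨅ 𝔥 ∈ S, Φ 𝔥`. -/
def LFilter.evalOn (hmono : ∀ a b c d : L, a ≤ b → c ≤ d → mul a c ≤ mul b d)
    (S : Set (LFilter L mul X)) : LFilter L mul (LFilter L mul X) where
  toFun Φ := ⨅ 𝔥 ∈ S, Φ 𝔥
  map_top := by simp
  mono Φ Ψ h := le_iInf₂ fun 𝔥 h𝔥 => le_trans (biInf_le _ h𝔥) (h 𝔥)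
  map_mul Φ Ψ := le_iInf₂ fun 𝔥 h𝔥 =>
    hmono _ _ _ _ (biInf_le _ h𝔥) (biInf_le _ h𝔥)

/-- Pushforward of a filter `𝔣` along `unit`. -/
def LFilter.pushUnit (𝔣 : LFilter L mul X) : LFilter L mul (LFilter L mul X) where
  toFun Φ := 𝔣.toFun fun x => Φ (LFilter.unit L mul x)
  map_top := 𝔣.map_top
  mono Φ Ψ h := 𝔣.mono _ _ fun x => h _
  map_mul Φ Ψ := 𝔣.map_mul _ _

/-- Given a convergence `r` and `𝔤`, the filter `Φ ↦ 𝔤 (fun w => ⨅_{r 𝔥 w} Φ 𝔥)`. -/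
def LFilter.relLift (hmono : ∀ a b c d : L, a ≤ b → c ≤ d → mul a c ≤ mul b d)
    (r : LFilter L mul X → X → Prop) (𝔤 : LFilter L mul X) :
    LFilter L mul (LFilter L mul X) where
  toFun Φ := 𝔤.toFun fun w => ⨅ 𝔥 ∈ {𝔥 : LFilter L mul X | r 𝔥 w}, Φ 𝔥
  map_top := by
    have : (fun w : X => ⨅ 𝔥 ∈ {𝔥 : LFilter L mul X | r 𝔥 w}, (⊤ : L)) =
        fun _ => (⊤ : L) := by funext w; simp
    simp only [this]; exact 𝔤.map_top
  mono Φ Ψ h := 𝔤.mono _ _ fun w =>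
    le_iInf₂ fun 𝔥 h𝔥 => le_trans (biInf_le _ h𝔥) (h 𝔥)
  map_mul Φ Ψ := le_trans (𝔤.map_mul _ _) (𝔤.mono _ _ fun w =>
    le_iInf₂ fun 𝔥 h𝔥 => hmono _ _ _ _ (biInf_le _ h𝔥) (biInf_le _ h𝔥))

/-- `Alg(F_L, 2) ≅ Top(L)` on objects: `α ↦ r_α` (with `r_α 𝔣 y ↔ α y ≤ 𝔣`
pointwise) and `r ↦ α_r` (with `α_r y = ⨅_{r 𝔣 y} 𝔣`) are mutually inverse
bijections between `L`-valued topologies and `(F_L,2)`-algebra structures for the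
Kleisli extension of the `L`-valued filter monad. -/
theorem lTopology_equiv_lConvergence
    (hmono : ∀ a b c d : L, a ≤ b → c ≤ d → mul a c ≤ mul b d) :
    (∀ α : X → LFilter L mul X, IsLTopology α →
      IsLConvergence fun (𝔣 : LFilter L mul X) (y : X) =>
        ∀ A : X → L, (α y).toFun A ≤ 𝔣.toFun A)
    ∧ (∀ r : LFilter L mul X → X → Prop, IsLConvergence r →
      IsLTopology fun y => LFilter.infOn hmono {𝔣 | r 𝔣 y})
    ∧ (∀ α : X → LFilter L mul X, IsLTopology α →
      ∀ (y : X) (A : X → L),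
        (LFilter.infOn hmono
            {𝔣 : LFilter L mul X |
              ∀ B : X → L, (α y).toFun B ≤ 𝔣.toFun B}).toFun A =
          (α y).toFun A)
    ∧ (∀ r : LFilter L mul X → X → Prop, IsLConvergence r →
      ∀ (𝔣 : LFilter L mul X) (y : X),
        (∀ A : X → L,
            (LFilter.infOn hmono {𝔤 | r 𝔤 y}).toFun A ≤ 𝔣.toFun A) ↔ r 𝔣 y) := by
  refine ⟨?_, ?_, ?_, ?_⟩
  · -- topology → convergence
    rintro α ⟨hK1, hK2⟩
    refine ⟨fun x A => hK1 x A, ?_⟩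
    intro 𝔉 g z hg hgz A
    have h1 : (α z).toFun A ≤ g.toFun fun y =>
        ⨅ 𝔣 ∈ {𝔣 : LFilter L mul X | ∀ B, (α y).toFun B ≤ 𝔣.toFun B}, 𝔣.toFun A := by
      refine le_trans (hK2 z A) (le_trans (hgz _) (g.mono _ _ fun y => ?_))
      exact le_iInf₂ fun 𝔣 h𝔣 => h𝔣 A
    exact le_trans h1 (hg fun 𝔣 => 𝔣.toFun A)
  · -- convergence → topology
    rintro r ⟨hL1, hL2⟩
    constructor
    · intro x A
      exact biInf_le (fun 𝔣 : LFilter L mul X => 𝔣.toFun A)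
        (show LFilter.unit L mul x ∈ {𝔣 : LFilter L mul X | r 𝔣 x} from hL1 x)
    · intro x A
      refine le_iInf₂ fun 𝔤 h𝔤 => ?_
      have hr : r (LFilter.mult (LFilter.relLift hmono r 𝔤)) x :=
        hL2 _ 𝔤 x (fun Φ => le_refl _) h𝔤
      exact biInf_le (fun 𝔣 : LFilter L mul X => 𝔣.toFun A)
        (show _ ∈ {𝔣 : LFilter L mul X | r 𝔣 x} from hr)
  · -- α ↦ r_α ↦ α
    rintro α ⟨hK1, hK2⟩ y A
    refine le_antisymm ?_ ?_
    · exact biInf_le _ (fun B => le_refl _)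
    · exact le_iInf₂ fun 𝔣 h𝔣 => h𝔣 A
  · -- r ↦ α_r ↦ r
    rintro r ⟨hL1, hL2⟩ 𝔣 y
    constructor
    · intro h
      -- Step 1: r (α_r y) y
      have hr1 : r (LFilter.infOn hmono {𝔤 | r 𝔤 y}) y := by
        have := hL2 (LFilter.evalOn hmono {𝔤 | r 𝔤 y}) (LFilter.unit L mul y) y
          (fun Φ => le_refl _) (hL1 y)
        have heq : LFilter.mult (LFilter.evalOn hmono {𝔤 | r 𝔤 y}) =
            LFilter.infOn hmono {𝔤 | r 𝔤 y} := LFilter.ext' rfl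
        rwa [heq] at this
      -- Step 2: transfer along ≤ using pushUnit 𝔣
      have hhyp : ∀ Φ : LFilter L mul X → L,
          (LFilter.infOn hmono {𝔤 | r 𝔤 y}).toFun
            (fun w => ⨅ 𝔥 ∈ {𝔥 : LFilter L mul X | r 𝔥 w}, Φ 𝔥) ≤
          (LFilter.pushUnit 𝔣).toFun Φ := by
        intro Φ
        refine le_trans (h _) (𝔣.mono _ _ fun w => ?_)
        exact biInf_le _ (hL1 w)
      have := hL2 (LFilter.pushUnit 𝔣) (LFilter.infOn hmono {𝔤 | r 𝔤 y}) y hhyp hr1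
      have heq : LFilter.mult (LFilter.pushUnit 𝔣) = 𝔣 := LFilter.ext' rfl
      rwa [heq] at this
    · intro h A
      exact biInf_le _ h
end
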